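/- Let f : ℝ^n → ℝ be a convex polynomial function and let P = {x ∈ ℝ^n : A x ≤ b} (componentwise inequality, A an m×n real matrix, b ∈ ℝ^m) be a nonempty polyhedron. If f is bounded from below on P, then f attains its minimum on P, i.e., there exists x* ∈ P with f(x*) ≤ f(x) for all x ∈ P. -/

import Mathlib

open MvPolynomial Filter Topology

variable {n : ℕ}

lemma poly_continuous (p : MvPolynomial (Fin n) ℝ) :
    Continuous fun x : EuclideanSpace ℝ (Fin n) => eval (fun i => x i) p := by
  induction p using MvPolynomial.induction_on with
  | C a => simpa using continuous_const
  | add p q hp hq => simp only [map_add]; exact hp.add hq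
  | mul_X p i hp => simp only [map_mul, eval_X]; exact hp.mul ((EuclideanSpace.proj i).continuous)

lemma line_poly (p : MvPolynomial (Fin n) ℝ) (x d : EuclideanSpace ℝ (Fin n)) :
    ∃ q : Polynomial ℝ, ∀ t : ℝ,
      q.eval t = eval (fun i => (x + t • d) i) p := by
  refine ⟨MvPolynomial.aeval (fun i => Polynomial.C (x i) + Polynomial.C (d i) * Polynomial.X) p, fun t => ?_⟩
  have h := MvPolynomial.comp_aeval_apply
    (fun i => Polynomial.C (x i) + Polynomial.C (d i) * Polynomial.X)
    (Polynomial.aeval t : Polynomial ℝ →ₐ[ℝ] ℝ) p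
  simp only [Polynomial.coe_aeval_eq_eval] at h
  rw [h]
  have : ∀ i : Fin n, (x + t • d) i = x i + d i * t := by
    intro i; simp [PiLp.add_apply, PiLp.smul_apply, mul_comm]
  simp only [this]
  simp only [MvPolynomial.aeval_def, MvPolynomial.eval, Polynomial.eval_add,
    Polynomial.eval_mul, Polynomial.eval_C, Polynomial.eval_X]
  rfl
-- convex f bounded above on a ray ⇒ nonincreasing along d everywhere
lemma mono_ray {E : Type*} [NormedAddCommGroup E] [NormedSpace ℝ E]
    {f : E → ℝ} (hconv : ConvexOn ℝ Set.univ f) (hcont : Continuous f)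
    {d x0 : E} {M : ℝ} (h : ∀ t : ℝ, 0 ≤ t → f (x0 + t • d) ≤ M) :
    ∀ (x : E) (s t : ℝ), s ≤ t → f (x + t • d) ≤ f (x + s • d) := by
  intro x s t hst
  rcases eq_or_lt_of_le hst with rfl | hlt
  · exact le_refl _
  set v := x + s • d with hv
  set c := x0 - v with hc
  set l : ℕ → ℝ := fun k => 1 / (k + 1) with hl
  have hlpos : ∀ k : ℕ, 0 < l k := by
    intro k; positivity
  have hl1 : ∀ k : ℕ, l k ≤ 1 := by
    intro k
    rw [hl, div_le_one (by positivity)]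
    simp
  have hT : Tendsto l atTop (nhds 0) := tendsto_one_div_add_atTop_nhds_zero_nat
  set p : ℕ → E := fun k => (1 - l k) • v + l k • (x0 + ((t - s) / l k) • d) with hp
  have hpk : ∀ k : ℕ, p k = v + (l k • c + (t - s) • d) := by
    intro k
    have h1 : l k • (((t - s) / l k) • d) = (t - s) • d := by
      rw [smul_smul, mul_div_cancel₀ _ (hlpos k).ne']
    calc p k = (1 - l k) • v + (l k • x0 + l k • (((t - s) / l k) • d)) := by
            rw [hp]; simp only [smul_add]
      _ = (1 - l k) • v + (l k • x0 + (t - s) • d) := by rw [h1]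
      _ = v + (l k • c + (t - s) • d) := by rw [hc]; module
  have hptend : Tendsto p atTop (nhds (x + t • d)) := by
    have h2 : Tendsto (fun k : ℕ => v + (l k • c + (t - s) • d)) atTop
        (nhds (v + ((0:ℝ) • c + (t - s) • d))) :=
      (tendsto_const_nhds : Tendsto (fun _ : ℕ => v) atTop _).add
        ((hT.smul_const c).add
          (tendsto_const_nhds : Tendsto (fun _ : ℕ => (t - s) • d) atTop _))
    have heq : v + ((0:ℝ) • c + (t - s) • d) = x + t • d := by rw [hv]; module
    rw [heq] at h2
    exact h2.congr fun k => (hpk k).symm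
  have hbound : ∀ k : ℕ, f (p k) ≤ (1 - l k) * f v + l k * M := by
    intro k
    have h1 := hconv.2 (Set.mem_univ v)
      (Set.mem_univ (x0 + ((t - s) / l k) • d))
      (show (0:ℝ) ≤ 1 - l k by linarith [hl1 k])
      (show (0:ℝ) ≤ l k from (hlpos k).le)
      (show (1 - l k) + l k = 1 by ring)
    refine le_trans h1 ?_
    have h2 : f (x0 + ((t - s) / l k) • d) ≤ M :=
      h _ (div_nonneg (by linarith) (hlpos k).le)
    have := mul_le_mul_of_nonneg_left h2 (hlpos k).le
    simp only [smul_eq_mul]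
    linarith
  have hfp : Tendsto (fun k => f (p k)) atTop (nhds (f (x + t • d))) :=
    (hcont.tendsto _).comp hptend
  have hrb : Tendsto (fun k => (1 - l k) * f v + l k * M) atTop (nhds (f v)) := by
    have h3 : Tendsto (fun k : ℕ => (1 - l k) * f v + l k * M) atTop
        (nhds ((1 - 0) * f v + 0 * M)) :=
      (((tendsto_const_nhds : Tendsto (fun _ : ℕ => (1:ℝ)) atTop _).sub hT).mul
        tendsto_const_nhds).add (hT.mul tendsto_const_nhds)
    simpa using h3
  exact le_of_tendsto_of_tendsto' hfp hrb hbound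
-- a nonincreasing polynomial bounded below on [0,∞) is constant
lemma poly_const {q : Polynomial ℝ}
    (hmono : ∀ s t : ℝ, s ≤ t → q.eval t ≤ q.eval s)
    {B : ℝ} (hb : ∀ t : ℝ, 0 ≤ t → B ≤ q.eval t) :
    ∀ t : ℝ, q.eval t = q.eval 0 := by
  by_cases hdeg : 0 < q.degree
  · exfalso
    have htend := Polynomial.abs_tendsto_atTop q hdeg
    obtain ⟨t, htgt, ht0⟩ :=
      ((htend.eventually_gt_atTop (max |q.eval 0| |B|)).and (eventually_ge_atTop (0:ℝ))).exists
    have hle : |q.eval t| ≤ max |q.eval 0| |B| := by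
      rw [abs_le]
      constructor
      · have h2 : |B| ≤ max |q.eval 0| |B| := le_max_right _ _
        have := neg_abs_le B
        linarith [hb t ht0]
      · have h1 := hmono 0 t ht0
        have h2 : q.eval 0 ≤ |q.eval 0| := le_abs_self _
        have h3 : |q.eval 0| ≤ max |q.eval 0| |B| := le_max_left _ _
        linarith
    linarith
  · have ha := Polynomial.degree_le_zero_iff.mp (not_lt.mp hdeg)
    intro t; rw [ha]; simp
-- an unbounded closed convex set in a finite-dimensional space contains a ray
lemma exists_ray {n : ℕ} {S : Set (EuclideanSpace ℝ (Fin n))}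
    (hclosed : IsClosed S) (hconv : Convex ℝ S)
    {x0 : EuclideanSpace ℝ (Fin n)} (hx0 : x0 ∈ S)
    (hub : ¬ Bornology.IsBounded S) :
    ∃ d : EuclideanSpace ℝ (Fin n), ‖d‖ = 1 ∧ ∀ t : ℝ, 0 ≤ t → x0 + t • d ∈ S := by
  have hseq : ∀ k : ℕ, ∃ x ∈ S, (k : ℝ) < ‖x - x0‖ := by
    intro k
    by_contra hcon
    push_neg at hcon
    exact hub ((Metric.isBounded_iff_subset_closedBall x0).mpr
      ⟨k, fun x hx => by
        simp only [Metric.mem_closedBall, dist_eq_norm]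
        exact hcon x hx⟩)
  choose u hu hnorm using hseq
  set R : ℕ → ℝ := fun k => ‖u k - x0‖ with hR
  have hRpos : ∀ k, 0 < R k := fun k => lt_of_le_of_lt (Nat.cast_nonneg k) (hnorm k)
  set w : ℕ → EuclideanSpace ℝ (Fin n) := fun k => (R k)⁻¹ • (u k - x0) with hw
  have hwsph : ∀ k, w k ∈ Metric.sphere (0 : EuclideanSpace ℝ (Fin n)) 1 := by
    intro k
    simp only [Metric.mem_sphere, dist_zero_right, hw, norm_smul, norm_inv, norm_norm]
    rw [Real.norm_eq_abs, abs_of_pos (hRpos k)]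
    field_simp
    simp only [hR]
    exact div_self (hRpos k).ne'
  obtain ⟨d, hd, φ, hφ, hconv2⟩ := (isCompact_sphere (0 : EuclideanSpace ℝ (Fin n)) 1).tendsto_subseq hwsph
  refine ⟨d, by simpa [Metric.mem_sphere, dist_zero_right] using hd, fun t ht => ?_⟩
  have hmem : ∀ᶠ j in atTop, x0 + t • w (φ j) ∈ S := by
    filter_upwards [eventually_ge_atTop (⌈t⌉₊)] with j hj
    have hRt : t ≤ R (φ j) := by
      have h1 : (⌈t⌉₊ : ℝ) ≤ (φ j : ℝ) := by exact_mod_cast le_trans hj (StrictMono.le_apply hφ)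
      have h2 := hnorm (φ j)
      have := Nat.le_ceil t
      simp only [hR]
      linarith
    have hcomb : x0 + t • w (φ j) = (1 - t / R (φ j)) • x0 + (t / R (φ j)) • u (φ j) := by
      rw [hw]
      rw [smul_smul]
      rw [show t * (R (φ j))⁻¹ = t / R (φ j) from (div_eq_mul_inv t _).symm]
      module
    rw [hcomb]
    refine hconv hx0 (hu (φ j)) ?_ (div_nonneg ht (hRpos _).le) (by ring)
    have : t / R (φ j) ≤ 1 := (div_le_one (hRpos _)).mpr hRt
    linarith
  have htends : Tendsto (fun j => x0 + t • w (φ j)) atTop (nhds (x0 + t • d)) :=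
    tendsto_const_nhds.add (hconv2.const_smul t)
  exact hclosed.mem_of_tendsto htends hmem

noncomputable section

def Stmt (n : ℕ) : Prop :=
  ∀ (m : ℕ) (f : EuclideanSpace ℝ (Fin n) → ℝ),
    (∃ p : MvPolynomial (Fin n) ℝ, ∀ x, f x = MvPolynomial.eval (fun i => x i) p) →
    ConvexOn ℝ Set.univ f →
    ∀ (A : Matrix (Fin m) (Fin n) ℝ) (b : Fin m → ℝ)
      (P : Set (EuclideanSpace ℝ (Fin n))),
      P = {x | ∀ i, A.mulVec (fun j => x j) i ≤ b i} →
      P.Nonempty → BddBelow (f '' P) →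
      ∃ xstar ∈ P, ∀ x ∈ P, f xstar ≤ f x

-- the coordinate functional as a linear map
def ell {N : ℕ} (c : Fin N → ℝ) : EuclideanSpace ℝ (Fin N) →ₗ[ℝ] ℝ where
  toFun x := ∑ j, c j * x j
  map_add' x y := by
    simp only [PiLp.add_apply, mul_add]
    rw [Finset.sum_add_distrib]
  map_smul' r x := by
    simp only [PiLp.smul_apply, smul_eq_mul, RingHom.id_apply, Finset.mul_sum]
    congr 1; funext j; ring

lemma euclid_sum_single {N : ℕ} (y : EuclideanSpace ℝ (Fin N)) :
    ∑ j, y j • EuclideanSpace.single j (1:ℝ) = y := by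
  ext i
  have : (∑ j : Fin N, y j • EuclideanSpace.single j (1:ℝ)) i
      = ∑ j : Fin N, (y j • EuclideanSpace.single j (1:ℝ)) i := by
    rw [WithLp.ofLp_sum]; exact Finset.sum_apply i Finset.univ _
  rw [this]
  simp [EuclideanSpace.single_apply]

lemma ell_apply {N : ℕ} (c : Fin N → ℝ) (x : EuclideanSpace ℝ (Fin N)) :
    ell c x = ∑ j, c j * x j := rfl

lemma hyp_reduce {n m : ℕ} (ih : Stmt n)
    (f : EuclideanSpace ℝ (Fin (n+1)) → ℝ)
    (p : MvPolynomial (Fin (n+1)) ℝ) (hp : ∀ x, f x = eval (fun i => x i) p)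
    (hconv : ConvexOn ℝ Set.univ f)
    (A : Matrix (Fin m) (Fin (n+1)) ℝ) (b : Fin m → ℝ)
    (c : Fin (n+1) → ℝ) (hc : c ≠ 0) (β : ℝ)
    (Q : Set (EuclideanSpace ℝ (Fin (n+1))))
    (hQ : Q = {x | (∀ i, A.mulVec (fun j => x j) i ≤ b i) ∧ ell c x = β})
    (hne : Q.Nonempty) (hbdd : BddBelow (f '' Q)) :
    ∃ xstar ∈ Q, ∀ x ∈ Q, f xstar ≤ f x := by
  classical
  obtain ⟨j0, hj0⟩ : ∃ j, c j ≠ 0 := by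
    by_contra hcon
    push_neg at hcon
    exact hc (funext hcon)
  set L := ell c with hL
  -- surjectivity of L
  have hsurj : Function.Surjective L := by
    intro r
    refine ⟨(r / c j0) • EuclideanSpace.single j0 1, ?_⟩
    rw [hL, ell_apply]
    simp only [PiLp.smul_apply, EuclideanSpace.single_apply, smul_eq_mul, mul_ite, mul_one,
      mul_zero]
    rw [Finset.sum_ite_eq' Finset.univ j0 (fun k => c k * (r / c j0))]
    simp only [Finset.mem_univ, if_true]
    field_simp
  have hrange : LinearMap.range L = ⊤ := LinearMap.range_eq_top.mpr hsurj
  have hkerrank : Module.finrank ℝ (LinearMap.ker L) = n := by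
    have h1 := LinearMap.finrank_range_add_finrank_ker L
    rw [hrange] at h1
    have h2 : Module.finrank ℝ (EuclideanSpace ℝ (Fin (n+1))) = n + 1 :=
      finrank_euclideanSpace_fin
    rw [h2] at h1
    simp only [finrank_top, Module.finrank_self] at h1
    omega
  set bK : Module.Basis (Fin n) ℝ (LinearMap.ker L) :=
    Module.finBasisOfFinrankEq ℝ (LinearMap.ker L) hkerrank with hbK
  set Lmap : EuclideanSpace ℝ (Fin n) →ₗ[ℝ] EuclideanSpace ℝ (Fin (n+1)) :=
    (LinearMap.ker L).subtype ∘ₗ (bK.equivFun.symm.toLinearMap) ∘ₗ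
      (WithLp.linearEquiv 2 ℝ (Fin n → ℝ)).toLinearMap with hLmap
  have hLker : ∀ y, L (Lmap y) = 0 := by
    intro y
    exact LinearMap.mem_ker.mp
      (bK.equivFun.symm ((WithLp.linearEquiv 2 ℝ (Fin n → ℝ)) y)).2
  have hLsurj : ∀ x, L x = 0 → ∃ y, Lmap y = x := by
    intro x hx
    refine ⟨(WithLp.linearEquiv 2 ℝ (Fin n → ℝ)).symm (bK.equivFun ⟨x, hx⟩), ?_⟩
    show (LinearMap.ker L).subtype (bK.equivFun.symm
      ((WithLp.linearEquiv 2 ℝ (Fin n → ℝ))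
        ((WithLp.linearEquiv 2 ℝ (Fin n → ℝ)).symm (bK.equivFun ⟨x, hx⟩)))) = x
    rw [LinearEquiv.apply_symm_apply, LinearEquiv.symm_apply_apply]
    rfl
  -- the base point on the hyperplane
  set γ : ℝ := ∑ j, c j * c j with hγdef
  have hγ : 0 < γ := by
    rw [hγdef]
    refine Finset.sum_pos' (fun i _ => mul_self_nonneg _)
      ⟨j0, Finset.mem_univ _, by exact mul_self_pos.mpr hj0⟩
  set chat : EuclideanSpace ℝ (Fin (n+1)) := (WithLp.equiv 2 _).symm c with hchat
  have hchatk : ∀ k, chat k = c k := fun k => rfl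
  set xh : EuclideanSpace ℝ (Fin (n+1)) := (β / γ) • chat with hxh
  have hLxh : L xh = β := by
    rw [hxh, map_smul, smul_eq_mul]
    have : L chat = γ := by
      rw [hL, ell_apply, hγdef]
      exact Finset.sum_congr rfl fun k _ => by rw [hchatk]
    rw [this]
    field_simp
  -- coordinates of Lmap
  set w : Fin n → EuclideanSpace ℝ (Fin (n+1)) :=
    fun j => Lmap (EuclideanSpace.single j 1) with hw
  have hLy : ∀ y : EuclideanSpace ℝ (Fin n), Lmap y = ∑ j, y j • w j := by
    intro y
    conv_lhs => rw [← euclid_sum_single y]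
    rw [map_sum]
    exact Finset.sum_congr rfl fun j _ => by rw [map_smul, hw]
  have hLyk : ∀ (y : EuclideanSpace ℝ (Fin n)) (k : Fin (n+1)),
      Lmap y k = ∑ j, y j * w j k := by
    intro y k
    rw [hLy]
    rw [show (∑ j, y j • w j) k = ∑ j, (y j • w j) k by rw [WithLp.ofLp_sum]; exact Finset.sum_apply k Finset.univ _]
    exact Finset.sum_congr rfl fun j _ => rfl
  -- the reduced data
  set A' : Matrix (Fin m) (Fin n) ℝ := fun i j => ∑ k, A i k * w j k with hA'def
  have hA' : ∀ (y : EuclideanSpace ℝ (Fin n)) (i : Fin m),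
      A'.mulVec (fun j => y j) i = A.mulVec (fun k => Lmap y k) i := by
    intro y i
    simp only [Matrix.mulVec, dotProduct, hA'def]
    simp only [Finset.sum_mul]
    rw [Finset.sum_comm]
    refine Finset.sum_congr rfl fun k _ => ?_
    rw [hLyk, Finset.mul_sum]
    refine Finset.sum_congr rfl fun j _ => by ring
  set b' : Fin m → ℝ := fun i => b i - A.mulVec (fun k => xh k) i with hb'
  set f' : EuclideanSpace ℝ (Fin n) → ℝ := fun y => f (xh + Lmap y) with hf'
  set P' : Set (EuclideanSpace ℝ (Fin n)) :=
    {y | ∀ i, A'.mulVec (fun j => y j) i ≤ b' i} with hP'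
  -- membership correspondence
  have hcoord : ∀ (y : EuclideanSpace ℝ (Fin n)) (k : Fin (n+1)),
      (xh + Lmap y) k = xh k + Lmap y k := fun y k => rfl
  have hmuladd : ∀ (y : EuclideanSpace ℝ (Fin n)) (i : Fin m),
      A.mulVec (fun k => (xh + Lmap y) k) i
        = A.mulVec (fun k => xh k) i + A.mulVec (fun k => Lmap y k) i := by
    intro y i
    have : (fun k => (xh + Lmap y) k) = (fun k => xh k) + (fun k => Lmap y k) := by
      funext k; exact hcoord y k
    rw [this, Matrix.mulVec_add]
    rfl
  have hmem : ∀ y : EuclideanSpace ℝ (Fin n), (xh + Lmap y) ∈ Q ↔ y ∈ P' := by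
    intro y
    rw [hQ]
    simp only [Set.mem_setOf_eq, hP', hb']
    constructor
    · rintro ⟨h1, _⟩ i
      have := h1 i
      rw [hmuladd y i] at this
      rw [hA']
      linarith
    · intro h1
      constructor
      · intro i
        have := h1 i
        rw [hA'] at this
        rw [hmuladd y i]
        linarith
      · rw [map_add, hLxh, hLker]
        ring
  have hsur : ∀ x ∈ Q, ∃ y, xh + Lmap y = x := by
    intro x hx
    have hxβ : L x = β := by rw [hQ] at hx; exact hx.2
    obtain ⟨y, hy⟩ := hLsurj (x - xh) (by rw [map_sub, hxβ, hLxh, sub_self])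
    exact ⟨y, by rw [hy]; abel⟩
  -- f' is a polynomial
  set q' : MvPolynomial (Fin n) ℝ :=
    MvPolynomial.aeval (fun k => C (xh k) + ∑ j, C (w j k) * X j) p with hq'def
  have hq' : ∀ y : EuclideanSpace ℝ (Fin n), f' y = eval (fun j => y j) q' := by
    intro y
    have h : MvPolynomial.aeval (fun j => y j) q'
        = MvPolynomial.aeval (fun k => MvPolynomial.aeval (R := ℝ) (fun j => y j)
            (C (xh k) + ∑ j, C (w j k) * X j)) p := by
      rw [hq'def]
      exact MvPolynomial.comp_aeval_apply _ _ p
    have h2 : (fun k => MvPolynomial.aeval (R := ℝ) (fun j => y j)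
        (C (xh k) + ∑ j, C (w j k) * X j)) = fun k => (xh + Lmap y) k := by
      funext k
      rw [hcoord, hLyk]
      simp only [map_add, map_sum, map_mul, MvPolynomial.aeval_C, MvPolynomial.aeval_X,
        Algebra.algebraMap_self, RingHom.id_apply]
      congr 1
      exact Finset.sum_congr rfl fun j _ => by ring
    have h3 : eval (fun j => y j) q' = MvPolynomial.aeval (fun j => y j) q' := by
      rw [← MvPolynomial.coe_aeval_eq_eval]; rfl
    rw [h3, h, h2]
    show f (xh + Lmap y) = _
    rw [hp (xh + Lmap y), ← MvPolynomial.coe_aeval_eq_eval]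
    rfl
  -- f' is convex
  have hconv' : ConvexOn ℝ Set.univ f' := by
    set Φ : EuclideanSpace ℝ (Fin n) →ᵃ[ℝ] EuclideanSpace ℝ (Fin (n+1)) :=
      { toFun := fun y => xh + Lmap y
        linear := Lmap
        map_vadd' := by
          intro q v
          simp only [vadd_eq_add, map_add]
          abel } with hΦ
    have := hconv.comp_affineMap Φ
    rw [Set.preimage_univ] at this
    exact this
  -- bounded below
  have hbdd' : BddBelow (f' '' P') := by
    refine hbdd.mono ?_
    rintro z ⟨y, hy, rfl⟩
    exact ⟨xh + Lmap y, (hmem y).mpr hy, rfl⟩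
  -- P' nonempty
  obtain ⟨x0, hx0⟩ := hne
  obtain ⟨y0, hy0⟩ := hsur x0 hx0
  have hP'ne : P'.Nonempty := ⟨y0, (hmem y0).mp (hy0 ▸ hx0)⟩
  obtain ⟨ystar, hystar, hymin⟩ :=
    ih m f' ⟨q', hq'⟩ hconv' A' b' P' rfl hP'ne hbdd'
  refine ⟨xh + Lmap ystar, (hmem ystar).mpr hystar, ?_⟩
  intro x hx
  obtain ⟨y, hy⟩ := hsur x hx
  have hyP' : y ∈ P' := (hmem y).mp (hy ▸ hx)
  have := hymin y hyP'
  rw [hf'] at this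
  rw [← hy]
  exact this

lemma mulVec_line {m N : ℕ} (A : Matrix (Fin m) (Fin N) ℝ)
    (x d : EuclideanSpace ℝ (Fin N)) (t : ℝ) (i : Fin m) :
    A.mulVec (fun j => (x + t • d) j) i
      = A.mulVec (fun j => x j) i + t * A.mulVec (fun j => d j) i := by
  have h : (fun j => (x + t • d) j) = (fun j => x j) + t • (fun j => d j) := by
    funext j
    simp [PiLp.add_apply, PiLp.smul_apply]
  rw [h, Matrix.mulVec_add, Matrix.mulVec_smul]
  simp

lemma stmt_zero : Stmt 0 := by
  intro m f _ _ A b P hP hne _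
  obtain ⟨x0, hx0⟩ := hne
  refine ⟨x0, hx0, fun x hx => ?_⟩
  have hxx : x = x0 := PiLp.ext fun i => Fin.elim0 i
  rw [hxx]

lemma stmt_succ {n : ℕ} (ih : Stmt n) : Stmt (n + 1) := by
  intro m f hpoly hconv A b P hP hne hbdd
  classical
  obtain ⟨p, hp⟩ := hpoly
  obtain ⟨x1, hx1⟩ := hne
  have hcont : Continuous f := by
    have hf : f = fun x => MvPolynomial.eval (fun i => x i) p := funext hp
    rw [hf]
    exact poly_continuous p
  obtain ⟨B, hB⟩ := hbdd
  have hBP : ∀ x ∈ P, B ≤ f x := fun x hx => hB ⟨x, hx, rfl⟩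
  by_cases hcase : ∃ d : EuclideanSpace ℝ (Fin (n+1)), d ≠ 0 ∧
      (∀ i, A.mulVec (fun j => d j) i ≤ 0) ∧
      ∃ x0 ∈ P, ∃ M, ∀ t : ℝ, 0 ≤ t → f (x0 + t • d) ≤ M
  · -- Case A : a recession direction along which f is bounded above
    obtain ⟨d, hd0, hAd, x0, hx0, M, hM⟩ := hcase
    have hmono := mono_ray hconv hcont hM
    have hray : ∀ x ∈ P, ∀ s : ℝ, 0 ≤ s → x + s • d ∈ P := by
      intro x hx s hs
      rw [hP]
      intro i
      rw [mulVec_line]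
      rw [hP] at hx
      have h1 := hx i
      nlinarith [hAd i]
    have hconst : ∀ x ∈ P, ∀ t : ℝ, f (x + t • d) = f x := by
      intro x hx t
      obtain ⟨q, hq⟩ := line_poly p x d
      have hqf : ∀ s : ℝ, q.eval s = f (x + s • d) := fun s => by rw [hq s, ← hp]
      have hmq : ∀ s t' : ℝ, s ≤ t' → q.eval t' ≤ q.eval s := by
        intro s t' h
        rw [hqf, hqf]
        exact hmono x s t' h
      have hbq : ∀ s : ℝ, 0 ≤ s → B ≤ q.eval s := fun s hs => by
        rw [hqf]
        exact hBP _ (hray x hx s hs)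
      have h2 := poly_const hmq hbq t
      rw [hqf, hqf] at h2
      rw [zero_smul, add_zero] at h2
      exact h2
    set I : Finset (Fin m) :=
      Finset.univ.filter (fun i => A.mulVec (fun j => d j) i < 0) with hI
    obtain ⟨j1, hj1⟩ : ∃ j, d j ≠ 0 := by
      by_contra h
      push_neg at h
      exact hd0 (PiLp.ext h)
    by_cases hIe : I = ∅
    · -- all rows orthogonal to d
      have hrow0 : ∀ i, A.mulVec (fun j => d j) i = 0 := by
        intro i
        by_contra h2
        have : i ∈ I := Finset.mem_filter.mpr
          ⟨Finset.mem_univ _, lt_of_le_of_ne (hAd i) h2⟩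
        rw [hIe] at this
        exact absurd this (Finset.notMem_empty i)
      set cd : Fin (n+1) → ℝ := fun j => d j with hcddef
      have hcd : cd ≠ 0 := fun hcon => hj1 (congrFun hcon j1)
      set γ : ℝ := ∑ j, cd j * cd j with hγdef
      have hγ : 0 < γ := by
        rw [hγdef]
        exact Finset.sum_pos' (fun i _ => mul_self_nonneg _)
          ⟨j1, Finset.mem_univ _, mul_self_pos.mpr hj1⟩
      have helld : ell cd d = γ := by rw [ell_apply]
      set Q : Set (EuclideanSpace ℝ (Fin (n+1))) :=
        {x | (∀ i, A.mulVec (fun j => x j) i ≤ b i) ∧ ell cd x = 0} with hQdef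
      have hslide : ∀ x ∈ P, x + (-(ell cd x)/γ) • d ∈ Q := by
        intro x hx
        rw [hP] at hx
        constructor
        · intro i
          rw [mulVec_line, hrow0 i]
          have := hx i
          linarith
        · rw [map_add, map_smul, smul_eq_mul, helld]
          field_simp
          ring
      have hQne : Q.Nonempty := ⟨_, hslide x1 hx1⟩
      have hQP : Q ⊆ P := fun x hx => by rw [hP]; exact hx.1
      have hQbdd : BddBelow (f '' Q) := ⟨B, by
        rintro z ⟨x, hx, rfl⟩
        exact hBP x (hQP hx)⟩
      obtain ⟨xstar, hxstarQ, hxmin⟩ :=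
        hyp_reduce ih f p hp hconv A b cd hcd 0 Q hQdef hQne hQbdd
      refine ⟨xstar, hQP hxstarQ, fun x hx => ?_⟩
      have h1 := hxmin _ (hslide x hx)
      have h2 := hconst x hx (-(ell cd x)/γ)
      rw [h2] at h1
      exact h1
    · -- some rows strictly decrease along d
      have hIne : I.Nonempty := Finset.nonempty_of_ne_empty hIe
      have hellrow : ∀ (i : Fin m) (x : EuclideanSpace ℝ (Fin (n+1))),
          ell (fun j => A i j) x = A.mulVec (fun j => x j) i := fun i x => rfl
      set Q : Fin m → Set (EuclideanSpace ℝ (Fin (n+1))) := fun i =>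
        {x | (∀ k, A.mulVec (fun j => x j) k ≤ b k) ∧ ell (fun j => A i j) x = b i}
        with hQdef
      have hQP : ∀ i, Q i ⊆ P := fun i x hx => by rw [hP]; exact hx.1
      have hrowne : ∀ i ∈ I, (fun j => A i j) ≠ 0 := by
        intro i hi hcon
        have h0 : A.mulVec (fun j => d j) i = 0 := by
          simp only [Matrix.mulVec, dotProduct]
          refine Finset.sum_eq_zero fun j _ => ?_
          rw [congrFun hcon j]
          simp
        have := (Finset.mem_filter.mp hi).2
        rw [h0] at this
        exact lt_irrefl 0 this
      have hslide : ∀ x ∈ P, ∃ x', x' ∈ P ∧ f x' = f x ∧ ∃ i ∈ I, x' ∈ Q i := by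
        intro x hx
        obtain ⟨i0, hi0I, hi0max⟩ := I.exists_max_image
          (fun i => (b i - A.mulVec (fun j => x j) i) / (A.mulVec (fun j => d j) i)) hIne
        set τ : ℝ := (b i0 - A.mulVec (fun j => x j) i0) / (A.mulVec (fun j => d j) i0)
          with hτ
        have hAdi0 : A.mulVec (fun j => d j) i0 < 0 := (Finset.mem_filter.mp hi0I).2
        have hfeasible : ∀ k, A.mulVec (fun j => (x + τ • d) j) k ≤ b k := by
          intro k
          rw [mulVec_line]
          rw [hP] at hx
          have hfk := hx k
          by_cases hk : k ∈ I
          · have hAdk : A.mulVec (fun j => d j) k < 0 := (Finset.mem_filter.mp hk).2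
            have hmax := hi0max k hk
            have h3 := (div_le_iff_of_neg hAdk).mp hmax
            linarith
          · have h0 : A.mulVec (fun j => d j) k = 0 := by
              have h4 := hAd k
              by_contra h5
              exact hk (Finset.mem_filter.mpr
                ⟨Finset.mem_univ _, lt_of_le_of_ne h4 h5⟩)
            rw [h0]
            linarith
        refine ⟨x + τ • d, ?_, hconst x hx τ, i0, hi0I, ?_⟩
        · rw [hP]; exact hfeasible
        · refine ⟨hfeasible, ?_⟩
          rw [hellrow, mulVec_line, hτ, div_mul_cancel₀ _ hAdi0.ne]
          ring
      have hmin : ∀ i : Fin m, ∃ z, (i ∈ I ∧ (Q i).Nonempty) →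
          (z ∈ Q i ∧ ∀ x ∈ Q i, f z ≤ f x) := by
        intro i
        by_cases h : i ∈ I ∧ (Q i).Nonempty
        · have hQbdd : BddBelow (f '' Q i) := ⟨B, by
            rintro z ⟨x, hx, rfl⟩
            exact hBP x (hQP i hx)⟩
          obtain ⟨z, hz1, hz2⟩ := hyp_reduce ih f p hp hconv A b
            (fun j => A i j) (hrowne i h.1) (b i) (Q i) rfl h.2 hQbdd
          exact ⟨z, fun _ => ⟨hz1, hz2⟩⟩
        · exact ⟨x1, fun hcon => absurd hcon h⟩
      choose z hz using hmin
      set J : Finset (Fin m) := I.filter (fun i => (Q i).Nonempty) with hJ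
      have hJne : J.Nonempty := by
        obtain ⟨x', _, _, i, hiI, hx'Q⟩ := hslide x1 hx1
        exact ⟨i, Finset.mem_filter.mpr ⟨hiI, ⟨x', hx'Q⟩⟩⟩
      obtain ⟨istar, histar, histarmin⟩ := J.exists_min_image (fun i => f (z i)) hJne
      have histar' : istar ∈ I ∧ (Q istar).Nonempty := by
        have := Finset.mem_filter.mp histar
        exact ⟨this.1, this.2⟩
      refine ⟨z istar, hQP istar (hz istar histar').1, fun x hx => ?_⟩
      obtain ⟨x', hx'P, hfx', i, hiI, hx'Q⟩ := hslide x hx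
      have hiJ : i ∈ J := Finset.mem_filter.mpr ⟨hiI, ⟨x', hx'Q⟩⟩
      have hi' : i ∈ I ∧ (Q i).Nonempty := ⟨hiI, ⟨x', hx'Q⟩⟩
      calc f (z istar) ≤ f (z i) := histarmin i hiJ
        _ ≤ f x' := (hz i hi').2 x' hx'Q
        _ = f x := hfx'
  · -- Case B : sublevel sets are compact
    set S : Set (EuclideanSpace ℝ (Fin (n+1))) := P ∩ {x | f x ≤ f x1} with hS
    have hSx1 : x1 ∈ S := ⟨hx1, by simp⟩
    have hPclosed : IsClosed P := by
      rw [hP]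
      have heq : {x : EuclideanSpace ℝ (Fin (n+1)) | ∀ i, A.mulVec (fun j => x j) i ≤ b i}
          = ⋂ i, {x | A.mulVec (fun j => x j) i ≤ b i} := by
        ext x; simp [Set.mem_iInter]
      rw [heq]
      refine isClosed_iInter fun i => isClosed_le ?_ continuous_const
      simp only [Matrix.mulVec, dotProduct]
      exact continuous_finset_sum _ fun j _ =>
        continuous_const.mul (EuclideanSpace.proj j).continuous
    have hPconv : Convex ℝ P := by
      rw [hP]
      have heq : {x : EuclideanSpace ℝ (Fin (n+1)) | ∀ i, A.mulVec (fun j => x j) i ≤ b i}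
          = ⋂ i, {x | A.mulVec (fun j => x j) i ≤ b i} := by
        ext x; simp [Set.mem_iInter]
      rw [heq]
      refine convex_iInter fun i => ?_
      have : {x : EuclideanSpace ℝ (Fin (n+1)) | A.mulVec (fun j => x j) i ≤ b i}
          = {x | ell (fun j => A i j) x ≤ b i} := rfl
      rw [this]
      exact convex_halfSpace_le ⟨fun x y => by rw [map_add], fun r x => by
        rw [map_smul]⟩ (b i)
    have hSclosed : IsClosed S := hPclosed.inter (isClosed_le hcont continuous_const)
    have hSconv : Convex ℝ S := by
      refine hPconv.inter ?_
      have := hconv.convex_le (f x1)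
      simpa using this
    have hSbounded : Bornology.IsBounded S := by
      by_contra hub
      obtain ⟨dd, hdd1, hray⟩ := exists_ray hSclosed hSconv hSx1 hub
      apply hcase
      have hdd0 : dd ≠ 0 := by
        intro hcon
        rw [hcon, norm_zero] at hdd1
        norm_num at hdd1
      refine ⟨dd, hdd0, ?_, x1, hx1, f x1, fun t ht => (hray t ht).2⟩
      intro i
      by_contra hpos
      push_neg at hpos
      rw [hP] at hx1
      set t : ℝ := (b i - A.mulVec (fun j => x1 j) i + 1) / (A.mulVec (fun j => dd j) i)
        with htdef
      have ht : 0 ≤ t := by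
        apply div_nonneg _ hpos.le
        have := hx1 i
        linarith
      have hmem := (hray t ht).1
      rw [hP] at hmem
      have h2 := hmem i
      rw [mulVec_line, htdef, div_mul_cancel₀ _ hpos.ne'] at h2
      linarith
    have hScompact : IsCompact S :=
      Metric.isCompact_of_isClosed_isBounded hSclosed hSbounded
    obtain ⟨xstar, hxstarS, hxmin⟩ :=
      hScompact.exists_isMinOn ⟨x1, hSx1⟩ hcont.continuousOn
    refine ⟨xstar, hxstarS.1, fun x hx => ?_⟩
    by_cases hxr : f x ≤ f x1
    · exact hxmin ⟨hx, hxr⟩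
    · have h1 : f xstar ≤ f x1 := hxmin hSx1
      push_neg at hxr
      linarith


/-- A convex polynomial function that is bounded from below on a
nonempty polyhedron attains its minimum on that polyhedron. -/
theorem convex_poly_attains_min_on_polyhedron {n m : ℕ}
    (f : EuclideanSpace ℝ (Fin n) → ℝ)
    (hpoly : ∃ p : MvPolynomial (Fin n) ℝ, ∀ x, f x = MvPolynomial.eval (fun i => x i) p)
    (hconv : ConvexOn ℝ Set.univ f)
    (A : Matrix (Fin m) (Fin n) ℝ) (b : Fin m → ℝ)
    (P : Set (EuclideanSpace ℝ (Fin n)))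
    (hP : P = {x | ∀ i, A.mulVec (fun j => x j) i ≤ b i})
    (hne : P.Nonempty)
    (hbdd : BddBelow (f '' P)) :
    ∃ xstar ∈ P, ∀ x ∈ P, f xstar ≤ f x := by
  have h : ∀ k, Stmt k := by
    intro k
    induction k with
    | zero => exact stmt_zero
    | succ k ihk => exact stmt_succ ihk
  exact h n m f hpoly hconv A b P hP hne hbdd

end
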